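/- Let (s_1, s_2) be a Cuntz family of order 2 on a complex Hilbert space H, let (a_n)_{n≥1} be the associated recursive fermion system, and let Ω ∈ H be a unit vector. Then: (i) a_n Ω = 0 for all n ≥ 1 if and only if s_1^n (s_1^*)^n Ω = Ω for all n ≥ 1 (the Fock representation is P[1]); (i*) a_n^* Ω = 0 for all n ≥ 1 if and only if s_2^n (s_2^*)^n Ω = Ω for all n ≥ 1 (the dual Fock representation is P[2]); (ii) a_{2n−1} Ω = 0 and a_{2n}^* Ω = 0 for all n ≥ 1 if and only if Ω satisfies the P[(1,2)]-condition with respect to (s_1, s_2) (the infinite wedge representation is P[12]); (ii*) a_{2n−1}^* Ω = 0 and a_{2n} Ω = 0 for all n ≥ 1 if and only if Ω satisfies the P[(2,1)]-condition with respect to (s_1, s_2) (the dual infinite wedge representation is P[21]). -/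

import Mathlib

noncomputable section

def IsCuntzFamily {H : Type*} [NormedAddCommGroup H] [InnerProductSpace ℂ H]
    [CompleteSpace H] {N : ℕ} (s : Fin N → H →L[ℂ] H) : Prop :=
  (∀ i j, star (s i) * s j = if i = j then (1 : H →L[ℂ] H) else 0) ∧
  ∑ i, s i * star (s i) = 1

def rfsAux {H : Type*} [NormedAddCommGroup H] [InnerProductSpace ℂ H]
    [CompleteSpace H] (s : Fin 2 → H →L[ℂ] H) : ℕ → H →L[ℂ] H
  | 0 => s 0 * star (s 1)
  | n + 1 => s 0 * rfsAux s n * star (s 0) - s 1 * rfsAux s n * star (s 1)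

/-- `rfs s n` is the fermion generator `a_n` (for `n ≥ 1`). -/
def rfs {H : Type*} [NormedAddCommGroup H] [InnerProductSpace ℂ H]
    [CompleteSpace H] (s : Fin 2 → H →L[ℂ] H) (n : ℕ) : H →L[ℂ] H :=
  rfsAux s (n - 1)

def wordOp {H : Type*} [NormedAddCommGroup H] [InnerProductSpace ℂ H]
    [CompleteSpace H] {N : ℕ} (s : Fin N → H →L[ℂ] H) : List (Fin N) → H →L[ℂ] H
  | [] => 1
  | j :: J => s j * wordOp s J

def PCond {H : Type*} [NormedAddCommGroup H] [InnerProductSpace ℂ H]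
    [CompleteSpace H] {N : ℕ} (s : Fin N → H →L[ℂ] H) (w : ℕ → Fin N) (Ω : H) : Prop :=
  ∀ n : ℕ, (wordOp s (List.ofFn fun k : Fin n => w k) *
      star (wordOp s (List.ofFn fun k : Fin n => w k))) Ω = Ω

namespace RFSProof

variable {H : Type*} [NormedAddCommGroup H] [InnerProductSpace ℂ H] [CompleteSpace H]
variable (s : Fin 2 → H →L[ℂ] H)

def Zop (X : H →L[ℂ] H) : H →L[ℂ] H :=
  s 0 * X * star (s 0) - s 1 * X * star (s 1)

lemma rfsAux_eq_iterate (n : ℕ) : rfsAux s n = (Zop s)^[n] (rfsAux s 0) := by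
  induction n with
  | zero => rfl
  | succ n ih => rw [Function.iterate_succ_apply', ← ih]; rfl

lemma star_Zop (X : H →L[ℂ] H) : star (Zop s X) = Zop s (star X) := by
  simp only [Zop, star_sub, star_mul, star_star, mul_assoc]

lemma star_rfsAux_eq_iterate (n : ℕ) :
    star (rfsAux s n) = (Zop s)^[n] (star (rfsAux s 0)) := by
  induction n with
  | zero => rfl
  | succ n ih =>
    rw [Function.iterate_succ_apply', ← ih]
    show star (Zop s (rfsAux s n)) = _
    rw [star_Zop]

lemma wordOp_append (L₁ L₂ : List (Fin 2)) :
    wordOp s (L₁ ++ L₂) = wordOp s L₁ * wordOp s L₂ := by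
  induction L₁ with
  | nil => simp [wordOp]
  | cons j L ih => simp [wordOp, ih, mul_assoc]

lemma wordOp_replicate (j : Fin 2) (n : ℕ) :
    wordOp s (List.replicate n j) = (s j) ^ n := by
  induction n with
  | zero => rfl
  | succ n ih => rw [List.replicate_succ]; show s j * _ = _; rw [ih, pow_succ']

variable {s} (hs : IsCuntzFamily s)
include hs

lemma star_apply_s (i j : Fin 2) (u : H) :
    (star (s i)) ((s j) u) = (if i = j then (1 : H →L[ℂ] H) else 0) u := by
  rw [← ContinuousLinearMap.mul_apply, hs.1]

lemma s_inj (i : Fin 2) {u : H} (h : (s i) u = 0) : u = 0 := by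
  have := congrArg (fun x => (star (s i)) x) h
  simp only [star_apply_s hs i i, if_pos rfl, map_zero] at this
  simpa using this

lemma Zop_apply_s (Y : H →L[ℂ] H) (j : Fin 2) (u : H) :
    Zop s Y ((s j) u) = (if j = 0 then (1:ℂ) else -1) • (s j) (Y u) := by
  have h0 := star_apply_s hs 0 j u
  have h1 := star_apply_s hs 1 j u
  fin_cases j <;>
    simp only [Zop, ContinuousLinearMap.sub_apply, ContinuousLinearMap.mul_apply] <;>
    simp_all

lemma wordOp_isometry (L : List (Fin 2)) :
    star (wordOp s L) * wordOp s L = 1 := by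
  induction L with
  | nil => simp [wordOp]
  | cons j L ih =>
    show star (s j * wordOp s L) * (s j * wordOp s L) = 1
    rw [star_mul, mul_assoc, ← mul_assoc (star (s j)), hs.1, if_pos rfl, one_mul, ih]

lemma wordOp_inj (L : List (Fin 2)) {v : H} (h : wordOp s L v = 0) : v = 0 := by
  have : (star (wordOp s L)) (wordOp s L v) = v := by
    rw [← ContinuousLinearMap.mul_apply, wordOp_isometry hs, ContinuousLinearMap.one_apply]
  rw [h, map_zero] at this
  exact this.symm

lemma twist (L : List (Fin 2)) :
    ∃ ε : ℂ, ε ≠ 0 ∧ ∀ (X : H →L[ℂ] H) (v : H),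
      ((Zop s)^[L.length] X) (wordOp s L v) = ε • wordOp s L (X v) := by
  induction L with
  | nil => exact ⟨1, one_ne_zero, fun X v => by simp [wordOp]⟩
  | cons j L ih =>
    obtain ⟨ε, hε, h⟩ := ih
    refine ⟨(if j = 0 then (1:ℂ) else -1) * ε, by fin_cases j <;> simpa using hε, fun X v => ?_⟩
    show ((Zop s)^[L.length + 1] X) ((s j) (wordOp s L v)) = _
    rw [Function.iterate_succ_apply', Zop_apply_s hs, h, map_smul, mul_smul]
    rfl

lemma sum_proj (ψ : H) : (s 0) ((star (s 0)) ψ) + (s 1) ((star (s 1)) ψ) = ψ := by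
  have h2 := hs.2
  rw [Fin.sum_univ_two] at h2
  calc (s 0) ((star (s 0)) ψ) + (s 1) ((star (s 1)) ψ)
      = (s 0 * star (s 0) + s 1 * star (s 1)) ψ := by
        simp [ContinuousLinearMap.add_apply, ContinuousLinearMap.mul_apply]
    _ = ψ := by rw [h2]; simp

lemma proj0_iff (ψ : H) : rfsAux s 0 ψ = 0 ↔ (s 0) ((star (s 0)) ψ) = ψ := by
  have hsum := sum_proj hs ψ
  have ha : rfsAux s 0 ψ = (s 0) ((star (s 1)) ψ) := by
    simp [rfsAux, ContinuousLinearMap.mul_apply]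
  rw [ha]
  constructor
  · intro h
    have h1 : (star (s 1)) ψ = 0 := s_inj hs 0 h
    rw [h1] at hsum; simpa using hsum
  · intro h
    have h1 : (s 1) ((star (s 1)) ψ) = 0 := by
      have h' := hsum; rw [h] at h'
      exact add_eq_left.mp h'
    rw [s_inj hs 1 h1]; simp

lemma proj1_iff (ψ : H) : (star (rfsAux s 0)) ψ = 0 ↔ (s 1) ((star (s 1)) ψ) = ψ := by
  have hsum := sum_proj hs ψ
  have hb : (star (rfsAux s 0)) ψ = (s 1) ((star (s 0)) ψ) := by
    show (star (s 0 * star (s 1))) ψ = _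
    rw [star_mul, star_star]
    simp [ContinuousLinearMap.mul_apply]
  rw [hb]
  constructor
  · intro h
    have h1 : (star (s 0)) ψ = 0 := s_inj hs 1 h
    rw [h1] at hsum; simpa using hsum
  · intro h
    have h1 : (s 0) ((star (s 0)) ψ) = 0 := by
      have h' := hsum; rw [h] at h'
      exact add_eq_right.mp h'
    rw [s_inj hs 0 h1]; simp

lemma baseStep (j : Fin 2) (ψ : H) :
    (if j = 0 then rfsAux s 0 ψ = 0 else (star (rfsAux s 0)) ψ = 0) ↔
      (s j) ((star (s j)) ψ) = ψ := by
  obtain rfl | rfl : j = 0 ∨ j = 1 := by omega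
  · simpa using proj0_iff hs ψ
  · rw [if_neg (by decide : (1 : Fin 2) ≠ 0)]
    exact proj1_iff hs ψ

lemma baseKill (j : Fin 2) (φ : H) :
    (if j = 0 then rfsAux s 0 ((s j) φ) = 0 else (star (rfsAux s 0)) ((s j) φ) = 0) := by
  obtain rfl | rfl : j = 0 ∨ j = 1 := by omega
  · rw [if_pos rfl]
    show (s 0 * star (s 1)) ((s 0) φ) = 0
    rw [ContinuousLinearMap.mul_apply, star_apply_s hs 1 0]
    simp
  · rw [if_neg (by decide : (1 : Fin 2) ≠ 0)]
    show (star (s 0 * star (s 1))) ((s 1) φ) = 0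
    rw [star_mul, star_star, ContinuousLinearMap.mul_apply, star_apply_s hs 0 1]
    simp

lemma main (w : ℕ → Fin 2) (Ω : H) :
    (∀ n : ℕ, if w n = 0 then rfsAux s n Ω = 0 else (star (rfsAux s n)) Ω = 0) ↔
    (∀ n : ℕ, (wordOp s (List.ofFn fun k : Fin n => w k) *
      star (wordOp s (List.ofFn fun k : Fin n => w k))) Ω = Ω) := by
  have hWsucc : ∀ n : ℕ, wordOp s (List.ofFn fun k : Fin (n+1) => w k) =
      wordOp s (List.ofFn fun k : Fin n => w k) * s (w n) := by
    intro n
    have hL : (List.ofFn fun k : Fin (n+1) => w k) =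
        (List.ofFn fun k : Fin n => w k) ++ [w n] := by
      rw [List.ofFn_succ']; simp [List.concat_eq_append]
    rw [hL, wordOp_append]
    simp [wordOp]
  constructor
  · intro h n
    induction n with
    | zero => simp [wordOp]
    | succ n ih =>
      set L := List.ofFn fun k : Fin n => w k with hLdef
      set ψ := (star (wordOp s L)) Ω with hψ
      have hΩ : wordOp s L ψ = Ω := by
        have := ih; rwa [ContinuousLinearMap.mul_apply] at this
      have hlen : L.length = n := List.length_ofFn
      obtain ⟨ε, hε, htw⟩ := twist hs L
      have hiter1 : rfsAux s n = (Zop s)^[L.length] (rfsAux s 0) := by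
        rw [hlen]; exact rfsAux_eq_iterate s n
      have hiter2 : star (rfsAux s n) = (Zop s)^[L.length] (star (rfsAux s 0)) := by
        rw [hlen]; exact star_rfsAux_eq_iterate s n
      have hcond : (s (w n)) ((star (s (w n))) ψ) = ψ := by
        rw [← baseStep hs]
        have hn := h n
        by_cases hw : w n = 0
        · rw [if_pos hw] at hn ⊢
          rw [hiter1, ← hΩ, htw] at hn
          exact wordOp_inj hs L ((smul_eq_zero.mp hn).resolve_left hε)
        · rw [if_neg hw] at hn ⊢
          rw [hiter2, ← hΩ, htw] at hn
          exact wordOp_inj hs L ((smul_eq_zero.mp hn).resolve_left hε)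
      rw [hWsucc n, star_mul]
      calc (wordOp s L * s (w n) * (star (s (w n)) * star (wordOp s L))) Ω
          = (wordOp s L) ((s (w n)) ((star (s (w n))) ((star (wordOp s L)) Ω))) := by
            simp [ContinuousLinearMap.mul_apply]
        _ = (wordOp s L) ψ := by rw [← hψ, hcond]
        _ = Ω := hΩ
  · intro h n
    set L := List.ofFn fun k : Fin n => w k with hLdef
    have hlen : L.length = n := List.length_ofFn
    obtain ⟨ε, hε, htw⟩ := twist hs L
    obtain ⟨φ, hΩ⟩ : ∃ φ, wordOp s L ((s (w n)) φ) = Ω := by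
      refine ⟨(star (s (w n))) ((star (wordOp s L)) Ω), ?_⟩
      have h1 := h (n+1)
      rw [hWsucc n, star_mul] at h1
      calc wordOp s L ((s (w n)) ((star (s (w n))) ((star (wordOp s L)) Ω)))
          = (wordOp s L * s (w n) * (star (s (w n)) * star (wordOp s L))) Ω := by
            simp [ContinuousLinearMap.mul_apply]
        _ = Ω := h1
    have hiter1 : rfsAux s n = (Zop s)^[L.length] (rfsAux s 0) := by
      rw [hlen]; exact rfsAux_eq_iterate s n
    have hiter2 : star (rfsAux s n) = (Zop s)^[L.length] (star (rfsAux s 0)) := by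
      rw [hlen]; exact star_rfsAux_eq_iterate s n
    have hk := baseKill hs (w n) φ
    by_cases hw : w n = 0
    · rw [if_pos hw]
      rw [hiter1, ← hΩ, htw]
      rw [if_pos hw] at hk
      rw [hk]
      simp
    · rw [if_neg hw]
      rw [hiter2, ← hΩ, htw]
      rw [if_neg hw] at hk
      rw [hk]
      simp

end RFSProof

theorem fock_and_wedge_as_permutative
    {H : Type*} [NormedAddCommGroup H] [InnerProductSpace ℂ H] [CompleteSpace H]
    (s : Fin 2 → H →L[ℂ] H) (hs : IsCuntzFamily s) (Ω : H) (hΩ : ‖Ω‖ = 1) :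
    -- (i) the Fock representation is `P[1]`
    ((∀ n : ℕ, 1 ≤ n → rfs s n Ω = 0) ↔
      (∀ n : ℕ, 1 ≤ n → ((s 0) ^ n * star ((s 0) ^ n)) Ω = Ω))
    -- (i*) the dual Fock representation is `P[2]`
    ∧ ((∀ n : ℕ, 1 ≤ n → star (rfs s n) Ω = 0) ↔
      (∀ n : ℕ, 1 ≤ n → ((s 1) ^ n * star ((s 1) ^ n)) Ω = Ω))
    -- (ii) the infinite wedge representation is `P[12]`
    ∧ ((∀ n : ℕ, 1 ≤ n → rfs s (2 * n - 1) Ω = 0 ∧ star (rfs s (2 * n)) Ω = 0) ↔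
      PCond s (fun k => (⟨k % 2, by omega⟩ : Fin 2)) Ω)
    -- (ii*) the dual infinite wedge representation is `P[21]`
    ∧ ((∀ n : ℕ, 1 ≤ n → star (rfs s (2 * n - 1)) Ω = 0 ∧ rfs s (2 * n) Ω = 0) ↔
      PCond s (fun k => (⟨(k + 1) % 2, by omega⟩ : Fin 2)) Ω) := by
  have hword : ∀ (j : Fin 2) (n : ℕ),
      wordOp s (List.ofFn fun _ : Fin n => j) = (s j) ^ n := by
    intro j n
    rw [List.ofFn_const, RFSProof.wordOp_replicate]
  refine ⟨?_, ?_, ?_, ?_⟩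
  · -- (i)
    have hm := RFSProof.main hs (fun _ => (0 : Fin 2)) Ω
    simp only [if_pos rfl] at hm
    constructor
    · intro h n hn
      have h' := hm.mp (fun m => by
        have := h (m + 1) (by omega)
        simpa [rfs] using this) n
      rwa [hword 0 n] at h'
    · intro h m hmn
      have h' := hm.mpr (fun n => by
        cases n with
        | zero => simp [wordOp]
        | succ k =>
          have := h (k + 1) (by omega)
          rwa [hword 0 (k+1)]) (m - 1)
      rw [rfs]
      exact h'
  · -- (i*)
    have hm := RFSProof.main hs (fun _ => (1 : Fin 2)) Ω
    simp only [if_neg (by decide : (1 : Fin 2) ≠ 0)] at hm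
    constructor
    · intro h n hn
      have h' := hm.mp (fun m => by
        have := h (m + 1) (by omega)
        simpa [rfs] using this) n
      rwa [hword 1 n] at h'
    · intro h m hmn
      have h' := hm.mpr (fun n => by
        cases n with
        | zero => simp [wordOp]
        | succ k =>
          have := h (k + 1) (by omega)
          rwa [hword 1 (k+1)]) (m - 1)
      rw [rfs]
      exact h'
  · -- (ii)
    have hm := RFSProof.main hs (fun k => (⟨k % 2, by omega⟩ : Fin 2)) Ω
    refine Iff.trans ?_ hm
    constructor
    · intro h m
      by_cases hp : m % 2 = 0
      · rw [if_pos (by simp [Fin.ext_iff, hp])]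
        have h' := (h (m / 2 + 1) (by omega)).1
        rw [rfs, show 2 * (m / 2 + 1) - 1 - 1 = m from by omega] at h'
        exact h'
      · rw [if_neg (by simp [Fin.ext_iff]; omega)]
        have h' := (h ((m + 1) / 2) (by omega)).2
        rw [rfs, show 2 * ((m + 1) / 2) - 1 = m from by omega] at h'
        exact h'
    · intro h n hn
      constructor
      · have h' := h (2 * n - 2)
        rw [if_pos (by simp [Fin.ext_iff]; omega)] at h'
        rw [rfs, show 2 * n - 1 - 1 = 2 * n - 2 from by omega]
        exact h'
      · have h' := h (2 * n - 1)
        rw [if_neg (by simp [Fin.ext_iff]; omega)] at h'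
        rw [rfs]
        exact h'
  · -- (ii*)
    have hm := RFSProof.main hs (fun k => (⟨(k + 1) % 2, by omega⟩ : Fin 2)) Ω
    refine Iff.trans ?_ hm
    constructor
    · intro h m
      by_cases hp : m % 2 = 0
      · rw [if_neg (by simp [Fin.ext_iff]; omega)]
        have h' := (h (m / 2 + 1) (by omega)).1
        rw [rfs, show 2 * (m / 2 + 1) - 1 - 1 = m from by omega] at h'
        exact h'
      · rw [if_pos (by simp [Fin.ext_iff]; omega)]
        have h' := (h ((m + 1) / 2) (by omega)).2
        rw [rfs, show 2 * ((m + 1) / 2) - 1 = m from by omega] at h'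
        exact h'
    · intro h n hn
      constructor
      · have h' := h (2 * n - 2)
        rw [if_neg (by simp [Fin.ext_iff]; omega)] at h'
        rw [rfs, show 2 * n - 1 - 1 = 2 * n - 2 from by omega]
        exact h'
      · have h' := h (2 * n - 1)
        rw [if_pos (by simp [Fin.ext_iff]; omega)] at h'
        rw [rfs]
        exact h'
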